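/- Let N be Poisson(1) and let c ≈ 0.715 be the unique strictly positive solution of c² + e^{−c} = 1. Define F(x) = exp(−c·e^{−x}) for x ≥ 0 (and F(x) = 0 for x < 0). Then F is a distribution function solving the RDE X =_d max(0, ξ_1 − X_1, …, ξ_N − X_N), where (ξ_i) are i.i.d. Exponential(1) and (X_i) are i.i.d. with distribution function F, all independent. -/

import Mathlib

open MeasureTheory ProbabilityTheory Real Set


lemma aux_mu_Iio_zero {c : ℝ} (μ : Measure ℝ)
    (hμcdf : ∀ y : ℝ, μ (Set.Iic y) =
      ENNReal.ofReal (if y < 0 then 0 else Real.exp (-(c * Real.exp (-y))))) :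
    μ (Set.Iio 0) = 0 := by
  have hsub : Set.Iio (0:ℝ) ⊆ ⋃ n : ℕ, Set.Iic (-(1/(n+1) : ℝ)) := by
    intro x hx
    simp only [Set.mem_Iio] at hx
    obtain ⟨n, hn⟩ := exists_nat_one_div_lt (show (0:ℝ) < -x by linarith)
    exact Set.mem_iUnion.2 ⟨n, by simp only [Set.mem_Iic]; linarith⟩
  refine le_antisymm (le_trans (measure_mono hsub) ?_) zero_le
  refine le_trans (measure_iUnion_le _) ?_
  have : ∀ n : ℕ, μ (Set.Iic (-(1/(n+1) : ℝ))) = 0 := by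
    intro n
    rw [hμcdf]
    have h1 : (-(1/(n+1) : ℝ)) < 0 := by
      have : (0:ℝ) < 1/(n+1) := by positivity
      linarith
    rw [if_pos h1, ENNReal.ofReal_zero]
  simpa using this


lemma aux_lintegral_exp_neg {c : ℝ} (hc : 0 < c) (hcfix : c ^ 2 + Real.exp (-c) = 1)
    (μ : Measure ℝ) [IsProbabilityMeasure μ]
    (hμcdf : ∀ y : ℝ, μ (Set.Iic y) =
      ENNReal.ofReal (if y < 0 then 0 else Real.exp (-(c * Real.exp (-y))))) :
    ∫⁻ b, ENNReal.ofReal (Real.exp (-b)) ∂μ = ENNReal.ofReal c := by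
  rw [lintegral_eq_lintegral_meas_le μ
    (Filter.Eventually.of_forall fun b => (Real.exp_pos (-b)).le)
    (Real.measurable_exp.comp measurable_neg).aemeasurable]
  have hset : ∀ t ∈ Set.Ioi (0:ℝ), μ {a : ℝ | t ≤ Real.exp (-a)} =
      (if 1 < t then 0 else ENNReal.ofReal (Real.exp (-(c * t)))) := by
    intro t ht
    simp only [Set.mem_Ioi] at ht
    have h1 : {a : ℝ | t ≤ Real.exp (-a)} = Set.Iic (-Real.log t) := by
      ext a
      simp only [Set.mem_setOf_eq, Set.mem_Iic]
      rw [show (t ≤ Real.exp (-a)) ↔ (Real.log t ≤ -a) from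
        ⟨fun h => (Real.log_le_iff_le_exp ht).2 h, fun h => (Real.log_le_iff_le_exp ht).1 h⟩]
      constructor <;> intro h <;> linarith
    rw [h1, hμcdf]
    have h2 : (-Real.log t < 0) ↔ (1 < t) := by
      rw [neg_lt_zero]
      exact Real.log_pos_iff ht.le
    by_cases h3 : 1 < t
    · rw [if_pos (by rw [h2]; exact h3), if_pos h3, ENNReal.ofReal_zero]
    · rw [if_neg (by rw [h2]; exact h3), if_neg h3, neg_neg, Real.exp_log ht]
  rw [setLIntegral_congr_fun measurableSet_Ioi hset]
  have hsplit : Set.Ioi (0:ℝ) = Set.Ioc 0 1 ∪ Set.Ioi 1 := (Set.Ioc_union_Ioi_eq_Ioi zero_le_one).symm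
  rw [hsplit, lintegral_union measurableSet_Ioi Set.Ioc_disjoint_Ioi_same]
  have hIoi : ∫⁻ t in Set.Ioi (1:ℝ), (if 1 < t then 0 else ENNReal.ofReal (Real.exp (-(c * t)))) = 0 := by
    rw [setLIntegral_congr_fun measurableSet_Ioi
      (fun t ht => if_pos (Set.mem_Ioi.mp ht))]
    simp
  have hIoc : ∫⁻ t in Set.Ioc (0:ℝ) 1, (if 1 < t then 0 else ENNReal.ofReal (Real.exp (-(c * t))))
      = ENNReal.ofReal c := by
    rw [setLIntegral_congr_fun measurableSet_Ioc
      (fun t ht => if_neg (not_lt.2 ht.2))]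
    rw [← ofReal_integral_eq_lintegral_ofReal]
    · congr 1
      have : ∫ t in Set.Ioc (0:ℝ) 1, Real.exp (-(c * t)) = ∫ t in (0:ℝ)..1, Real.exp (-(c * t)) := by
        rw [intervalIntegral.integral_of_le zero_le_one]
      rw [this]
      have hderiv : ∀ t ∈ Set.uIcc (0:ℝ) 1, HasDerivAt (fun t => -Real.exp (-(c * t)) / c)
          (Real.exp (-(c * t))) t := by
        intro t _
        have h1 : HasDerivAt (fun x : ℝ => -(c * x)) (-(c * 1)) t :=
          ((hasDerivAt_id t).const_mul c).neg
        have h2 := (h1.exp.div_const c).neg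
        have h3 : -(Real.exp (-(c * t)) * -(c * 1) / c) = Real.exp (-(c * t)) := by
          field_simp
        rw [h3] at h2
        simpa [neg_div, Pi.neg_def] using h2
      rw [intervalIntegral.integral_eq_sub_of_hasDerivAt hderiv
        (Continuous.intervalIntegrable (((continuous_const.mul continuous_id).neg).rexp) 0 1)]
      field_simp
      simp only [mul_zero, neg_zero, Real.exp_zero]
      nlinarith [hcfix]
    · exact (Continuous.integrableOn_Ioc (((continuous_const.mul continuous_id).neg).rexp))
    · exact Filter.Eventually.of_forall fun t => (Real.exp_pos _).le
  rw [hIoi, hIoc, add_zero]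


lemma aux_prod_measure {c y : ℝ} (hc : 0 < c) (hcfix : c ^ 2 + Real.exp (-c) = 1)
    (hy : 0 ≤ y) (μ : Measure ℝ) [IsProbabilityMeasure μ]
    (hμcdf : ∀ y : ℝ, μ (Set.Iic y) =
      ENNReal.ofReal (if y < 0 then 0 else Real.exp (-(c * Real.exp (-y))))) :
    ((expMeasure 1).prod μ) {p : ℝ × ℝ | p.1 - p.2 ≤ y} =
      ENNReal.ofReal (1 - c * Real.exp (-y)) := by
  have : IsProbabilityMeasure (expMeasure 1) := isProbabilityMeasure_expMeasure zero_lt_one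
  have hS : MeasurableSet {p : ℝ × ℝ | p.1 - p.2 ≤ y} :=
    measurableSet_le (measurable_fst.sub measurable_snd) measurable_const
  rw [Measure.prod_apply_symm hS]
  have hae : ∀ᵐ b ∂μ, 0 ≤ b := by
    have h0 := aux_mu_Iio_zero μ hμcdf
    rw [Filter.eventually_iff, mem_ae_iff]
    convert h0 using 2
    ext b
    simp [not_le]
  have hcongr : ∀ᵐ b ∂μ, expMeasure 1 ((fun a => (a, b)) ⁻¹' {p : ℝ × ℝ | p.1 - p.2 ≤ y}) =
      1 - ENNReal.ofReal (Real.exp (-y)) * ENNReal.ofReal (Real.exp (-b)) := by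
    filter_upwards [hae] with b hb
    have hsec : ((fun a => (a, b)) ⁻¹' {p : ℝ × ℝ | p.1 - p.2 ≤ y}) = Set.Iic (y + b) := by
      ext a; simp only [Set.mem_preimage, Set.mem_setOf_eq, Set.mem_Iic]; constructor <;> intro h <;> linarith
    rw [hsec]
    have h1 : expMeasure 1 (Set.Iic (y + b)) = ENNReal.ofReal (cdf (expMeasure 1) (y + b)) := by
      rw [ofReal_cdf]
    rw [h1, cdf_expMeasure_eq zero_lt_one, if_pos (by linarith)]
    rw [one_mul, show (-(y + b)) = (-y) + (-b) by ring, Real.exp_add]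
    rw [ENNReal.ofReal_sub _ (by positivity), ENNReal.ofReal_one,
      ENNReal.ofReal_mul (Real.exp_pos _).le]
  rw [lintegral_congr_ae hcongr]
  have hg : Measurable fun b : ℝ => ENNReal.ofReal (Real.exp (-b)) := by
    exact (Real.measurable_exp.comp measurable_neg).ennreal_ofReal
  have hmeas : Measurable fun b : ℝ => ENNReal.ofReal (Real.exp (-y)) * ENNReal.ofReal (Real.exp (-b)) := by
    exact ((Real.measurable_exp.comp measurable_neg).ennreal_ofReal).const_mul _
  have hle : (fun b : ℝ => ENNReal.ofReal (Real.exp (-y)) * ENNReal.ofReal (Real.exp (-b)))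
      ≤ᵐ[μ] fun _ => (1 : ENNReal) := by
    filter_upwards [hae] with b hb
    rw [← ENNReal.ofReal_mul (Real.exp_pos _).le, ← ENNReal.ofReal_one]
    apply ENNReal.ofReal_le_ofReal
    rw [← Real.exp_add]
    exact Real.exp_le_one_iff.2 (by linarith)
  have hfin : ∫⁻ b, ENNReal.ofReal (Real.exp (-y)) * ENNReal.ofReal (Real.exp (-b)) ∂μ ≠ ⊤ := by
    rw [lintegral_const_mul _ hg,
      aux_lintegral_exp_neg hc hcfix μ hμcdf]
    exact ENNReal.mul_ne_top ENNReal.ofReal_ne_top ENNReal.ofReal_ne_top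
  rw [lintegral_sub hmeas hfin hle]
  rw [lintegral_const_mul _ hg,
    aux_lintegral_exp_neg hc hcfix μ hμcdf, lintegral_one, measure_univ]
  rw [← ENNReal.ofReal_mul (Real.exp_pos _).le, ← ENNReal.ofReal_one,
    ← ENNReal.ofReal_sub _ (by positivity)]
  congr 1
  ring

lemma aux_poisson_sum {p : ℝ} (hp0 : 0 ≤ p) :
    ∑' n : ℕ, poissonMeasure 1 {n} * ENNReal.ofReal (p ^ n) =
      ENNReal.ofReal (Real.exp (p - 1)) := by
  have hsummand : ∀ n : ℕ, poissonMeasure 1 {n} * ENNReal.ofReal (p ^ n)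
      = ENNReal.ofReal (Real.exp (-1) * (p ^ n / n.factorial)) := by
    intro n
    rw [poissonMeasure_singleton]
    rw [← ENNReal.ofReal_mul (by positivity)]
    congr 1
    push_cast
    rw [one_pow]
    ring
  simp_rw [hsummand]
  rw [← ENNReal.ofReal_tsum_of_nonneg (fun n => by positivity)
    ((Real.summable_pow_div_factorial p).mul_left _)]
  congr 1
  rw [tsum_mul_left]
  have : ∑' n : ℕ, p ^ n / n.factorial = Real.exp p := by
    rw [Real.exp_eq_exp_ℝ, NormedSpace.exp_eq_tsum_div]
  rw [this, ← Real.exp_add]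
  ring_nf

/-- Let `N` be Poisson(1), `c > 0` the unique solution of
`c² + e^{-c} = 1`, and `F(x) = exp(-c e^{-x})` for `x ≥ 0` (`F(x) = 0` for `x < 0`).
If `(ξ_i)` are i.i.d. Exponential(1) and `(X_i)` i.i.d. with distribution function `F`,
all independent, then `max(0, ξ_1 - X_1, …, ξ_N - X_N)` again has distribution
function `F` (the maximum over an empty index set being `0`). -/

theorem exponential_matching_rde
    {Ω : Type*} [MeasurableSpace Ω] (P : Measure Ω) [IsProbabilityMeasure P]
    (c : ℝ) (hc : 0 < c) (hcfix : c ^ 2 + Real.exp (-c) = 1)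
    (μ : Measure ℝ) [IsProbabilityMeasure μ]
    (hμcdf : ∀ y : ℝ, μ (Set.Iic y) =
      ENNReal.ofReal (if y < 0 then 0 else Real.exp (-(c * Real.exp (-y)))))
    (N : Ω → ℕ) (pair : ℕ → Ω → ℝ × ℝ)
    (hN : Measure.map N P = poissonMeasure 1)
    (hpairIndep : iIndepFun pair P)
    (hpairLaw : ∀ i, Measure.map (pair i) P = (expMeasure 1).prod μ)
    (hNindep : IndepFun N (fun ω i => pair i ω) P) :
    ∀ y : ℝ,
      P {ω | (((Finset.range (N ω)).sup fun i =>
          Real.toNNReal ((pair i ω).1 - (pair i ω).2) : NNReal) : ℝ) ≤ y} =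
        ENNReal.ofReal (if y < 0 then 0 else Real.exp (-(c * Real.exp (-y)))) := by
  intro y
  by_cases hy : y < 0
  · rw [if_pos hy]
    have hempty : {ω | (((Finset.range (N ω)).sup fun i =>
        Real.toNNReal ((pair i ω).1 - (pair i ω).2) : NNReal) : ℝ) ≤ y} = (∅ : Set Ω) := by
      ext ω
      simp only [Set.mem_setOf_eq, Set.mem_empty_iff_false, iff_false, not_le]
      exact lt_of_lt_of_le hy (NNReal.coe_nonneg _)
    rw [hempty, measure_empty, ENNReal.ofReal_zero]
  · push_neg at hy
    rw [if_neg (not_lt.2 hy)]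
    have hexp1 : IsProbabilityMeasure (expMeasure 1) := isProbabilityMeasure_expMeasure zero_lt_one
    -- a.e.-measurability of the random variables
    have hNmeas : AEMeasurable N P := by
      by_contra h
      rw [Measure.map_of_not_aemeasurable h] at hN
      have h1 : (poissonMeasure 1) Set.univ = 1 := measure_univ
      rw [← hN] at h1
      simp at h1
    have hpmeas : ∀ i, AEMeasurable (pair i) P := by
      intro i
      by_contra h
      have hl := hpairLaw i
      rw [Measure.map_of_not_aemeasurable h] at hl
      have h1 : ((expMeasure 1).prod μ) Set.univ = 1 := measure_univ
      rw [← hl] at h1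
      simp at h1
    set D : ℕ → Ω → ℝ := fun i ω => (pair i ω).1 - (pair i ω).2 with hD
    set S : Set (ℝ × ℝ) := {p : ℝ × ℝ | p.1 - p.2 ≤ y} with hSdef
    have hS : MeasurableSet S :=
      measurableSet_le (measurable_fst.sub measurable_snd) measurable_const
    set g : Ω → ℕ → ℝ × ℝ := fun ω i => pair i ω with hg
    have hgmeas : AEMeasurable g P := by
      refine ⟨fun ω i => (hpmeas i).mk _ ω, measurable_pi_lambda _ (fun i => (hpmeas i).measurable_mk), ?_⟩
      have := MeasureTheory.ae_all_iff.2 (fun i : ℕ => (hpmeas i).ae_eq_mk)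
      filter_upwards [this] with ω hω
      funext i
      exact hω i
    set T : ℕ → Set (ℕ → ℝ × ℝ) := fun n => ⋂ i ∈ Finset.range n, (fun v => v i) ⁻¹' S with hT
    have hTmeas : ∀ n, MeasurableSet (T n) := by
      intro n
      exact MeasurableSet.biInter (Set.to_countable _) fun i _ => (measurable_pi_apply i) hS
    have hkey : ∀ ω : Ω, ((((Finset.range (N ω)).sup fun i =>
        Real.toNNReal (D i ω) : NNReal) : ℝ) ≤ y) ↔
        ∀ i ∈ Finset.range (N ω), D i ω ≤ y := by
      intro ω
      constructor
      · intro h i hi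
        have h2 : ((Real.toNNReal (D i ω) : NNReal) : ℝ) ≤ y :=
          le_trans (NNReal.coe_le_coe.2
            (Finset.le_sup (f := fun i => Real.toNNReal (D i ω)) hi)) h
        exact le_trans (Real.le_coe_toNNReal _) h2
      · intro h
        have h2 : (Finset.range (N ω)).sup (fun i => Real.toNNReal (D i ω)) ≤ Real.toNNReal y :=
          Finset.sup_le fun i hi => Real.toNNReal_mono (h i hi)
        calc (((Finset.range (N ω)).sup fun i => Real.toNNReal (D i ω) : NNReal) : ℝ)
            ≤ ((Real.toNNReal y : NNReal) : ℝ) := NNReal.coe_le_coe.2 h2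
          _ = y := Real.coe_toNNReal y hy
    have hev : {ω | (((Finset.range (N ω)).sup fun i =>
        Real.toNNReal (D i ω) : NNReal) : ℝ) ≤ y} =
        ⋃ n : ℕ, (N ⁻¹' {n} ∩ g ⁻¹' T n) := by
      ext ω
      simp only [Set.mem_setOf_eq, Set.mem_iUnion, Set.mem_inter_iff, Set.mem_preimage,
        Set.mem_singleton_iff, hkey ω, hT, Set.mem_iInter, hg]
      constructor
      · intro h
        exact ⟨N ω, rfl, fun i hi => h i hi⟩
      · rintro ⟨n, rfl, h⟩
        exact fun i hi => h i hi
    rw [hev, measure_iUnion₀]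
    rotate_left
    · intro m n hmn
      refine Disjoint.aedisjoint ?_
      rw [Set.disjoint_left]
      rintro ω ⟨h1, _⟩ ⟨h2, _⟩
      simp only [Set.mem_preimage, Set.mem_singleton_iff] at h1 h2
      exact hmn (h1 ▸ h2 ▸ rfl)
    · intro n
      exact (hNmeas.nullMeasurable (measurableSet_singleton n)).inter
        (hgmeas.nullMeasurable (hTmeas n))
    have hc1 : c < 1 := by nlinarith [Real.exp_pos (-c)]
    have hp0 : 0 ≤ 1 - c * Real.exp (-y) := by
      have : Real.exp (-y) ≤ 1 := Real.exp_le_one_iff.2 (by linarith)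
      nlinarith
    have hterm : ∀ n : ℕ, P (N ⁻¹' {n} ∩ g ⁻¹' T n) =
        poissonMeasure 1 {n} * ENNReal.ofReal ((1 - c * Real.exp (-y)) ^ n) := by
      intro n
      rw [hNindep.measure_inter_preimage_eq_mul _ _ (measurableSet_singleton n) (hTmeas n)]
      congr 1
      · rw [← hN, Measure.map_apply_of_aemeasurable hNmeas (measurableSet_singleton n)]
      · have heq : g ⁻¹' T n = ⋂ i ∈ Finset.range n, pair i ⁻¹' S := by
          ext ω
          simp only [Set.mem_preimage, hT, Set.mem_iInter, hg]
        rw [heq, hpairIndep.measure_inter_preimage_eq_mul (S := Finset.range n)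
          (sets := fun _ => S) (fun i _ => hS)]
        have hone : ∀ i, P (pair i ⁻¹' S) = ENNReal.ofReal (1 - c * Real.exp (-y)) := by
          intro i
          rw [← Measure.map_apply_of_aemeasurable (hpmeas i) hS, hpairLaw i,
            aux_prod_measure hc hcfix hy μ hμcdf]
        rw [Finset.prod_congr rfl (fun i _ => hone i), Finset.prod_const, Finset.card_range,
          ← ENNReal.ofReal_pow hp0]
    simp_rw [hterm]
    rw [aux_poisson_sum hp0]
    congr 1
    ring_nf
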